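/- Let f(x,y) be a Laurent polynomial over a field K whose Newton polytope is contained in a triangle Δ. Suppose Δ has an edge E whose only integral points are its two endpoints, and the coefficients of f at both endpoints of E are nonzero. Then f is irreducible in the Laurent polynomial ring K[x^{±1}, y^{±1}]. -/

import Mathlib

noncomputable section

/-- Laurent polynomials in two variables over `K`. -/
abbrev LP (K : Type*) [Field K] := AddMonoidAlgebra K (ℤ × ℤ)

/-- Embedding of lattice points into the real plane. -/
def toR : ℤ × ℤ → ℝ × ℝ := fun p => ((p.1 : ℝ), (p.2 : ℝ))

/-- The Newton polytope of a Laurent polynomial: convex hull of its exponent vectors. -/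
def newtonPolytope {K : Type*} [Field K] (f : LP K) : Set (ℝ × ℝ) :=
  convexHull ℝ (toR '' (f.coeff.support : Set (ℤ × ℤ)))


namespace Stmt0Aux
open Finsupp AddMonoidAlgebra Pointwise
open scoped Classical

variable {K : Type*} [Field K]

/-- A linear functional on the lattice. -/
def lf (α β : ℝ) : (ℤ × ℤ) →+ ℝ where
  toFun p := α * (p.1 : ℝ) + β * (p.2 : ℝ)
  map_zero' := by simp
  map_add' p q := by simp [Prod.fst_add, Prod.snd_add]; push_cast; ring

lemma lf_apply (α β : ℝ) (p : ℤ × ℤ) : lf α β p = α * (p.1 : ℝ) + β * (p.2 : ℝ) := rfl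

/-- The part of `g` on the face `{μ = M}`. -/
def top (μ : (ℤ × ℤ) →+ ℝ) (M : ℝ) (g : LP K) : LP K :=
  AddMonoidAlgebra.ofCoeff (Finsupp.filter (fun p => μ p = M) g.coeff)

lemma top_apply (μ : (ℤ × ℤ) →+ ℝ) (M : ℝ) (g : LP K) (x : ℤ × ℤ) :
    (top μ M g).coeff x = if μ x = M then g.coeff x else 0 :=
  Finsupp.filter_apply _ g.coeff x

lemma top_support (μ : (ℤ × ℤ) →+ ℝ) (M : ℝ) (g : LP K) :
    (top μ M g).coeff.support = g.coeff.support.filter (fun p => μ p = M) :=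
  Finsupp.support_filter _ _

lemma mul_apply' (g h : LP K) (x : ℤ × ℤ) :
    (g * h).coeff x = ∑ p ∈ g.coeff.support, ∑ q ∈ h.coeff.support, if p + q = x then g.coeff p * h.coeff q else 0 := by
  rw [AddMonoidAlgebra.coeff_mul]; rfl

lemma top_mul (μ : (ℤ × ℤ) →+ ℝ) (Mg Mh : ℝ) (g h : LP K)
    (hg : ∀ p ∈ g.coeff.support, μ p ≤ Mg) (hh : ∀ q ∈ h.coeff.support, μ q ≤ Mh) :
    top μ (Mg + Mh) (g * h) = top μ Mg g * top μ Mh h := by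
  ext x
  have hrhs : (top μ Mg g * top μ Mh h).coeff x
      = ∑ p ∈ g.coeff.support, ∑ q ∈ h.coeff.support,
          if p + q = x then (top μ Mg g).coeff p * (top μ Mh h).coeff q else 0 := by
    have sub1 : (top μ Mg g).coeff.support ⊆ g.coeff.support := by
      rw [top_support]; exact Finset.filter_subset _ _
    have sub2 : (top μ Mh h).coeff.support ⊆ h.coeff.support := by
      rw [top_support]; exact Finset.filter_subset _ _
    rw [mul_apply']
    calc ∑ p ∈ (top μ Mg g).coeff.support, ∑ q ∈ (top μ Mh h).coeff.support,
            (if p + q = x then (top μ Mg g).coeff p * (top μ Mh h).coeff q else 0)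
        = ∑ p ∈ (top μ Mg g).coeff.support, ∑ q ∈ h.coeff.support,
            (if p + q = x then (top μ Mg g).coeff p * (top μ Mh h).coeff q else 0) :=
          Finset.sum_congr rfl fun p _ => Finset.sum_subset sub2
            (fun q _ hq => by rw [Finsupp.notMem_support_iff.mp hq]; simp)
      _ = ∑ p ∈ g.coeff.support, ∑ q ∈ h.coeff.support,
            (if p + q = x then (top μ Mg g).coeff p * (top μ Mh h).coeff q else 0) :=
          Finset.sum_subset sub1
            (fun p _ hp => Finset.sum_eq_zero fun q _ => by
              rw [Finsupp.notMem_support_iff.mp hp]; simp)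
  rw [hrhs, top_apply]
  by_cases hx : μ x = Mg + Mh
  · rw [if_pos hx, mul_apply']
    refine Finset.sum_congr rfl fun p hp => Finset.sum_congr rfl fun q hq => ?_
    by_cases hpq : p + q = x
    · rw [if_pos hpq, if_pos hpq]
      have h1 : μ p + μ q = Mg + Mh := by rw [← map_add, hpq, hx]
      have h2 : μ p = Mg := le_antisymm (hg p hp) (by have := hh q hq; linarith)
      have h3 : μ q = Mh := by linarith [hg p hp]
      rw [top_apply, top_apply, if_pos h2, if_pos h3]
    · rw [if_neg hpq, if_neg hpq]
  · rw [if_neg hx]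
    refine (Finset.sum_eq_zero fun p hp => Finset.sum_eq_zero fun q hq => ?_).symm
    by_cases hpq : p + q = x
    · rw [if_pos hpq]
      by_cases h2 : μ p = Mg
      · by_cases h3 : μ q = Mh
        · exact absurd (by rw [← hpq, map_add, h2, h3]) hx
        · rw [top_apply μ Mh h, if_neg h3, mul_zero]
      · rw [top_apply μ Mg g, if_neg h2, zero_mul]
    · rw [if_neg hpq]

lemma exists_max (μ : (ℤ × ℤ) →+ ℝ) (g : LP K) (hg : g ≠ 0) :
    ∃ M : ℝ, (∀ p ∈ g.coeff.support, μ p ≤ M) ∧ ∃ p ∈ g.coeff.support, μ p = M := by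
  have hne : g.coeff.support.Nonempty := Finsupp.support_nonempty_iff.mpr (by simpa using hg)
  obtain ⟨p, hp, hM⟩ := Finset.exists_mem_eq_sup' hne (fun q => μ q)
  exact ⟨g.coeff.support.sup' hne (fun q => μ q), fun q hq => Finset.le_sup' _ hq, p, hp, hM.symm⟩

lemma top_ne_zero (μ : (ℤ × ℤ) →+ ℝ) (M : ℝ) (g : LP K) {p : ℤ × ℤ}
    (hp : p ∈ g.coeff.support) (hpM : μ p = M) : top μ M g ≠ 0 := by
  intro h0
  have : (top μ M g).coeff p = g.coeff p := by rw [top_apply, if_pos hpM]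
  rw [h0] at this
  exact Finsupp.mem_support_iff.mp hp this.symm

lemma mul_attains (μ : (ℤ × ℤ) →+ ℝ) (Mg Mh : ℝ) (g h : LP K)
    (hg : ∀ p ∈ g.coeff.support, μ p ≤ Mg) (hg' : ∃ p ∈ g.coeff.support, μ p = Mg)
    (hh : ∀ q ∈ h.coeff.support, μ q ≤ Mh) (hh' : ∃ q ∈ h.coeff.support, μ q = Mh) :
    (∀ s ∈ (g * h).coeff.support, μ s ≤ Mg + Mh) ∧ ∃ s ∈ (g * h).coeff.support, μ s = Mg + Mh := by
  constructor
  · intro s hs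
    obtain ⟨p, hp, q, hq, rfl⟩ := Finset.mem_add.mp (AddMonoidAlgebra.support_coeff_mul_subset g h hs)
    rw [map_add]
    exact add_le_add (hg p hp) (hh q hq)
  · obtain ⟨p, hp, hpM⟩ := hg'
    obtain ⟨q, hq, hqM⟩ := hh'
    have hTg := top_ne_zero μ Mg g hp hpM
    have hTh := top_ne_zero μ Mh h hq hqM
    have hT : top μ Mg g * top μ Mh h ≠ 0 := mul_ne_zero hTg hTh
    obtain ⟨s, hs⟩ := Finsupp.support_nonempty_iff.mpr (mt AddMonoidAlgebra.coeff_eq_zero.mp hT)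
    refine ⟨s, ?_, ?_⟩
    · have := Finsupp.mem_support_iff.mp hs
      rw [← top_mul μ Mg Mh g h hg hh, top_apply] at this
      by_cases hxs : μ s = Mg + Mh
      · rw [if_pos hxs] at this; exact Finsupp.mem_support_iff.mpr this
      · rw [if_neg hxs] at this; exact absurd rfl this
    · obtain ⟨p', hp', q', hq', rfl⟩ :=
        Finset.mem_add.mp (AddMonoidAlgebra.support_coeff_mul_subset _ _ hs)
      rw [top_support] at hp' hq'
      obtain ⟨_, hp'2⟩ := Finset.mem_filter.mp hp'
      obtain ⟨_, hq'2⟩ := Finset.mem_filter.mp hq'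
      rw [map_add, hp'2, hq'2]



def cross (u v : ℝ × ℝ) : ℝ := u.1 * v.2 - u.2 * v.1

lemma mem_triangle {A B C x : ℝ × ℝ} (hx : x ∈ convexHull ℝ {A, B, C}) :
    ∃ t u v : ℝ, 0 ≤ t ∧ 0 ≤ u ∧ 0 ≤ v ∧ t + u + v = 1 ∧ x = t • A + u • B + v • C := by
  have h1 : ({A, B, C} : Set (ℝ × ℝ)) = insert A {B, C} := rfl
  rw [h1, convexHull_insert ⟨B, by simp⟩, mem_convexJoin] at hx
  obtain ⟨a, ha, z, hz, hseg⟩ := hx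
  rw [Set.mem_singleton_iff] at ha
  subst ha
  rw [convexHull_pair] at hz
  obtain ⟨u', v', hu', hv', huv', hz⟩ := hz
  obtain ⟨t, w, ht, hw, htw, hx⟩ := hseg
  refine ⟨t, w * u', w * v', ht, mul_nonneg hw hu', mul_nonneg hw hv', by nlinarith, ?_⟩
  rw [← hx, ← hz, smul_add, smul_smul, smul_smul, add_assoc]

lemma cross_zero_imp {u v : ℝ × ℝ} (hu : u ≠ 0) (huv : cross u v = 0) :
    ∃ r : ℝ, v = r • u := by
  by_cases h1 : u.1 ≠ 0
  · refine ⟨v.1 / u.1, ?_⟩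
    have : u.1 * v.2 = u.2 * v.1 := by rw [cross] at huv; linarith
    ext
    · simp; field_simp
    · simp; field_simp; nlinarith
  · push_neg at h1
    have h2 : u.2 ≠ 0 := fun h2 => hu (Prod.ext h1 h2)
    refine ⟨v.2 / u.2, ?_⟩
    have hv1 : u.2 * v.1 = 0 := by rw [cross, h1] at huv; linarith
    have hv1' : v.1 = 0 := by
      rcases mul_eq_zero.mp hv1 with h | h
      · exact absurd h h2
      · exact h
    ext
    · simp [hv1', h1]
    · simp; field_simp

lemma cross_ne {A B C : ℝ × ℝ} (h : AffineIndependent ℝ ![A, B, C]) :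
    cross (B - A) (C - A) ≠ 0 := by
  intro hc
  rw [affineIndependent_iff_not_collinear_set] at h
  apply h
  by_cases hBA : B - A = 0
  · have hBA' : B = A := by
      have := sub_eq_zero.mp hBA; exact this
    rw [hBA', Set.insert_comm, Set.insert_idem, Set.pair_comm]
    exact collinear_pair ℝ C A
  · obtain ⟨r, hr⟩ := cross_zero_imp hBA hc
    rw [collinear_iff_of_mem (Set.mem_insert A {B, C})]
    refine ⟨B - A, ?_⟩
    intro p hp
    rcases hp with rfl | hp
    · exact ⟨0, by simp⟩
    · rcases hp with rfl | hp
      · exact ⟨1, by simp⟩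
      · rw [Set.mem_singleton_iff] at hp
        subst hp
        exact ⟨r, by rw [← hr]; simp⟩

lemma cross_indep_kill {u w v : ℝ × ℝ} (huv : cross u v = 0) (hwv : cross w v = 0)
    (huw : cross u w ≠ 0) : v = 0 := by
  rw [cross] at huv hwv huw
  have h1 : v.1 * (u.1 * w.2 - u.2 * w.1) = 0 := by linear_combination w.1 * huv - u.1 * hwv
  have h2 : v.2 * (u.1 * w.2 - u.2 * w.1) = 0 := by linear_combination w.2 * huv - u.2 * hwv
  have hv1 : v.1 = 0 := by
    rcases mul_eq_zero.mp h1 with h | h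
    · exact h
    · exact absurd h huw
  have hv2 : v.2 = 0 := by
    rcases mul_eq_zero.mp h2 with h | h
    · exact h
    · exact absurd h huw
  exact Prod.ext hv1 hv2

lemma toR_inj : Function.Injective toR := by
  intro p q h
  have h1 : ((p.1 : ℝ)) = q.1 := congrArg Prod.fst h
  have h2 : ((p.2 : ℝ)) = q.2 := congrArg Prod.snd h
  exact Prod.ext (by exact_mod_cast h1) (by exact_mod_cast h2)

lemma bezout (a b : ℤ × ℤ) (hab : a ≠ b)
    (hedge : ∀ p : ℤ × ℤ, toR p ∈ segment ℝ (toR a) (toR b) → p = a ∨ p = b) :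
    ∃ α β : ℤ, α * (b.1 - a.1) + β * (b.2 - a.2) = 1 := by
  set d : ℤ × ℤ := (b.1 - a.1, b.2 - a.2) with hd
  have hdne : ¬(d.1 = 0 ∧ d.2 = 0) := by
    rintro ⟨h1, h2⟩
    apply hab
    simp [hd] at h1 h2
    ext <;> omega
  set γ : ℕ := Int.gcd d.1 d.2 with hγ
  have hγ0 : γ ≠ 0 := fun h => hdne (Int.gcd_eq_zero_iff.mp h)
  have hγ1 : γ = 1 := by
    by_contra hγ1
    have hγ2 : 2 ≤ (γ : ℤ) := by omega
    obtain ⟨e1, he1⟩ : (γ:ℤ) ∣ d.1 := Int.gcd_dvd_left _ _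
    obtain ⟨e2, he2⟩ : (γ:ℤ) ∣ d.2 := Int.gcd_dvd_right _ _
    have hγR : (γ : ℝ) ≠ 0 := by positivity
    have hc1 : ((e1 : ℝ)) = ((b.1 : ℝ) - (a.1 : ℝ)) / γ := by
      rw [eq_div_iff hγR]
      have : ((d.1 : ℝ)) = (γ : ℝ) * e1 := by exact_mod_cast he1
      simp only [hd] at this
      push_cast at this
      linarith
    have hc2 : ((e2 : ℝ)) = ((b.2 : ℝ) - (a.2 : ℝ)) / γ := by
      rw [eq_div_iff hγR]
      have : ((d.2 : ℝ)) = (γ : ℝ) * e2 := by exact_mod_cast he2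
      simp only [hd] at this
      push_cast at this
      linarith
    have hseg : toR (a + (e1, e2)) ∈ segment ℝ (toR a) (toR b) := by
      refine ⟨1 - 1/(γ:ℝ), 1/(γ:ℝ), by
        have : (1:ℝ)/(γ:ℝ) ≤ 1 := by
          rw [div_le_one (by positivity)]
          exact_mod_cast by omega
        linarith, by positivity, by ring, ?_⟩
      ext
      · show (1 - 1/(γ:ℝ)) * (a.1 : ℝ) + (1/(γ:ℝ)) * (b.1 : ℝ) = (((a + (e1,e2)).1 : ℤ) : ℝ)
        have : ((a + (e1,e2)).1 : ℤ) = a.1 + e1 := rfl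
        rw [this]
        push_cast [hc1]
        field_simp
        ring
      · show (1 - 1/(γ:ℝ)) * (a.2 : ℝ) + (1/(γ:ℝ)) * (b.2 : ℝ) = (((a + (e1,e2)).2 : ℤ) : ℝ)
        have : ((a + (e1,e2)).2 : ℤ) = a.2 + e2 := rfl
        rw [this]
        push_cast [hc2]
        field_simp
        ring
    have hd1 : d.1 = b.1 - a.1 := rfl
    have hd2 : d.2 = b.2 - a.2 := rfl
    rcases hedge _ hseg with h | h
    · have h1 : a.1 + e1 = a.1 := congrArg Prod.fst h
      have h2 : a.2 + e2 = a.2 := congrArg Prod.snd h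
      have hz1 : d.1 = 0 := by
        have : e1 = 0 := by omega
        rw [he1, this, mul_zero]
      have hz2 : d.2 = 0 := by
        have : e2 = 0 := by omega
        rw [he2, this, mul_zero]
      exact hdne ⟨hz1, hz2⟩
    · have h1 : a.1 + e1 = b.1 := congrArg Prod.fst h
      have h2 : a.2 + e2 = b.2 := congrArg Prod.snd h
      have hz1 : d.1 = 0 := by nlinarith
      have hz2 : d.2 = 0 := by nlinarith
      exact hdne ⟨hz1, hz2⟩
  obtain ⟨α, β, hαβ⟩ := Int.isCoprime_iff_gcd_eq_one.mpr hγ1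
  exact ⟨α, β, by simp only [hd] at hαβ; exact hαβ⟩


lemma isUnit_of_support_eq (g : LP K) (p : ℤ × ℤ) (hs : g.coeff.support = {p}) : IsUnit g := by
  obtain ⟨hne, hg⟩ := Finsupp.support_eq_singleton.mp hs
  set c := g.coeff p with hc
  have hgs : g = AddMonoidAlgebra.single p c := AddMonoidAlgebra.coeff_injective hg
  refine IsUnit.of_mul_eq_one (a := g) (AddMonoidAlgebra.single (-p) c⁻¹) ?_
  rw [hgs, AddMonoidAlgebra.single_mul_single, add_neg_cancel, mul_inv_cancel₀ hne,
    AddMonoidAlgebra.one_def]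

lemma isUnit_support_eq {f : LP K} (hf : IsUnit f) {p q : ℤ × ℤ}
    (hp : p ∈ f.coeff.support) (hq : q ∈ f.coeff.support) : p = q := by
  obtain ⟨u, rfl⟩ := hf
  set w := ((u⁻¹ : Units (LP K)) : LP K) with hwdef
  have hw : (u : LP K) * w = 1 := u.mul_inv
  have hf0 : (u : LP K) ≠ 0 := fun h0 => by
    rw [h0, zero_mul] at hw; exact one_ne_zero hw.symm
  have hw0 : w ≠ 0 := fun h0 => by
    rw [h0, mul_zero] at hw; exact one_ne_zero hw.symm
  have key : ∀ μ : (ℤ × ℤ) →+ ℝ, μ p = μ q := by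
    intro μ
    have hsupone : (1 : LP K).coeff.support = {0} := by
      rw [AddMonoidAlgebra.one_def]
      exact Finsupp.support_single_ne_zero 0 one_ne_zero
    have main : ∀ ν : (ℤ × ℤ) →+ ℝ, ∃ Mf Mw : ℝ,
        (∀ r ∈ (u : LP K).coeff.support, ν r ≤ Mf) ∧ (∀ r ∈ w.coeff.support, ν r ≤ Mw) ∧
        Mf + Mw = 0 := by
      intro ν
      obtain ⟨Mf, hMf, hMf'⟩ := exists_max ν (u : LP K) hf0
      obtain ⟨Mw, hMw, hMw'⟩ := exists_max ν w hw0
      obtain ⟨_, s, hs, hsM⟩ := mul_attains ν Mf Mw _ w hMf hMf' hMw hMw'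
      rw [hw, hsupone, Finset.mem_singleton] at hs
      subst hs
      rw [map_zero] at hsM
      exact ⟨Mf, Mw, hMf, hMw, hsM.symm⟩
    obtain ⟨Mf, Mw, hMf, hMw, hMM⟩ := main μ
    obtain ⟨M'f, M'w, hM'f, hM'w, hM'M⟩ := main (-μ)
    obtain ⟨r0, hr0⟩ := Finsupp.support_nonempty_iff.mpr (mt AddMonoidAlgebra.coeff_eq_zero.mp hw0)
    have e1 : μ p ≤ Mf := hMf p hp
    have e2 : μ q ≤ Mf := hMf q hq
    have e3 : -(μ p) ≤ M'f := by simpa using hM'f p hp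
    have e4 : -(μ q) ≤ M'f := by simpa using hM'f q hq
    have e5 : μ r0 ≤ Mw := hMw r0 hr0
    have e6 : -(μ r0) ≤ M'w := by simpa using hM'w r0 hr0
    linarith
  have k1 := key (lf 1 0)
  have k2 := key (lf 0 1)
  rw [lf_apply, lf_apply] at k1 k2
  simp at k1 k2
  exact Prod.ext (by exact_mod_cast k1) (by exact_mod_cast k2)

lemma core (f g h : LP K) (hf : f = g * h) (hg0 : g ≠ 0) (hh0 : h ≠ 0)
    (a b : ℤ × ℤ) (lam en1 en2 rho : (ℤ × ℤ) →+ ℝ)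
    (hsum : ∀ v : ℤ × ℤ, lam v + en1 v + en2 v = 0)
    (hkill : ∀ v : ℤ × ℤ, lam v = 0 → en1 v = 0 → v = 0)
    (hkill2 : ∀ v : ℤ × ℤ, lam v = 0 → rho v = 0 → v = 0)
    (Hlam : ∀ p ∈ f.coeff.support, lam p ≤ lam a)
    (H1 : ∀ p ∈ f.coeff.support, en1 p ≤ en1 a)
    (H2 : ∀ p ∈ f.coeff.support, en2 p ≤ en2 b)
    (ha : f.coeff a ≠ 0) (hb : f.coeff b ≠ 0) (hlamb : lam b = lam a)
    (Mg : ℝ) (hMg : ∀ p ∈ g.coeff.support, lam p ≤ Mg) (hMg' : ∃ p ∈ g.coeff.support, lam p = Mg)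
    (hwidth : ∀ p ∈ g.coeff.support, lam p = Mg → ∀ q ∈ g.coeff.support, lam q = Mg → rho p = rho q) :
    IsUnit g := by
  have haf : a ∈ f.coeff.support := Finsupp.mem_support_iff.mpr ha
  have hbf : b ∈ f.coeff.support := Finsupp.mem_support_iff.mpr hb
  obtain ⟨pa, hpa, qa, hqa, hpqa⟩ := Finset.mem_add.mp
    (AddMonoidAlgebra.support_coeff_mul_subset g h (hf ▸ haf))
  obtain ⟨pb, hpb, qb, hqb, hpqb⟩ := Finset.mem_add.mp
    (AddMonoidAlgebra.support_coeff_mul_subset g h (hf ▸ hbf))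
  obtain ⟨Mh, hMh, hMh'⟩ := exists_max lam h hh0
  -- lam-maximum equality
  have hMM : Mg + Mh = lam a := by
    obtain ⟨_, s, hs, hsM⟩ := mul_attains lam Mg Mh g h hMg hMg' hMh hMh'
    rw [← hf] at hs
    refine le_antisymm (hsM ▸ Hlam s hs) ?_
    calc lam a = lam pa + lam qa := by rw [← map_add, hpqa]
    _ ≤ Mg + Mh := add_le_add (hMg pa hpa) (hMh qa hqa)
  obtain ⟨p, hpg, hpM⟩ := hMg'
  -- support of top of g is {p}
  have hTgsupp : (top lam Mg g).coeff.support = {p} := by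
    ext q
    rw [top_support, Finset.mem_filter, Finset.mem_singleton]
    constructor
    · rintro ⟨hqg, hqM⟩
      have h1 : lam (q - p) = 0 := by rw [map_sub, hqM, hpM, sub_self]
      have h2 : rho (q - p) = 0 := by
        rw [map_sub, hwidth q hqg hqM p hpg hpM, sub_self]
      have := hkill2 _ h1 h2
      rwa [sub_eq_zero] at this
    · rintro rfl
      exact ⟨hpg, hpM⟩
  obtain ⟨hTgp0, hTgsingle⟩ := Finsupp.support_eq_singleton.mp hTgsupp
  have hTgp : (top lam Mg g).coeff p = g.coeff p := by rw [top_apply, if_pos hpM]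
  have hc0 : g.coeff p ≠ 0 := Finsupp.mem_support_iff.mp hpg
  -- top multiplicativity
  have htm : top lam (lam a) f = top lam Mg g * top lam Mh h := by
    rw [hf, ← hMM]
    exact top_mul lam Mg Mh g h hMg hMh
  -- locate a - p and b - p in the support of h
  have hhx : ∀ x : ℤ × ℤ, f.coeff x ≠ 0 → lam x = lam a →
      (-p + x) ∈ h.coeff.support ∧ lam (-p + x) = Mh := by
    intro x hx hlx
    have h1 : (top lam (lam a) f).coeff x = f.coeff x := by rw [top_apply, if_pos hlx]
    have h2 : (top lam (lam a) f).coeff x = g.coeff p * (top lam Mh h).coeff (-p + x) := by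
      rw [htm, show top lam Mg g = AddMonoidAlgebra.single p (g.coeff p) from
        AddMonoidAlgebra.coeff_injective (hTgsingle.trans (congrArg (Finsupp.single p) hTgp))]
      exact AddMonoidAlgebra.coeff_single_mul_apply (top lam Mh h) (g.coeff p) p x
    have h3 : (top lam Mh h).coeff (-p + x) ≠ 0 := by
      intro h0
      rw [h2, h0, mul_zero] at h1
      exact hx h1.symm
    rw [top_apply] at h3
    by_cases hc : lam (-p + x) = Mh
    · rw [if_pos hc] at h3
      exact ⟨Finsupp.mem_support_iff.mpr h3, hc⟩
    · rw [if_neg hc] at h3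
      exact absurd rfl h3
  obtain ⟨hah, _⟩ := hhx a ha rfl
  obtain ⟨hbh, _⟩ := hhx b hb hlamb
  -- en1 analysis
  obtain ⟨M1g, hM1g, hM1g'⟩ := exists_max en1 g hg0
  obtain ⟨M1h, hM1h, hM1h'⟩ := exists_max en1 h hh0
  have hM1 : M1g + M1h = en1 a := by
    obtain ⟨_, s, hs, hsM⟩ := mul_attains en1 M1g M1h g h hM1g hM1g' hM1h hM1h'
    rw [← hf] at hs
    refine le_antisymm (hsM ▸ H1 s hs) ?_
    calc en1 a = en1 pa + en1 qa := by rw [← map_add, hpqa]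
    _ ≤ M1g + M1h := add_le_add (hM1g pa hpa) (hM1h qa hqa)
  have hM1gp : M1g ≤ en1 p := by
    have h1 : en1 (-p + a) ≤ M1h := hM1h _ hah
    have h2 : en1 (-p + a) = en1 a - en1 p := by
      rw [map_add, map_neg]; ring
    linarith
  -- en2 analysis
  obtain ⟨M2g, hM2g, hM2g'⟩ := exists_max en2 g hg0
  obtain ⟨M2h, hM2h, hM2h'⟩ := exists_max en2 h hh0
  have hM2 : M2g + M2h = en2 b := by
    obtain ⟨_, s, hs, hsM⟩ := mul_attains en2 M2g M2h g h hM2g hM2g' hM2h hM2h'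
    rw [← hf] at hs
    refine le_antisymm (hsM ▸ H2 s hs) ?_
    calc en2 b = en2 pb + en2 qb := by rw [← map_add, hpqb]
    _ ≤ M2g + M2h := add_le_add (hM2g pb hpb) (hM2h qb hqb)
  have hM2gp : M2g ≤ en2 p := by
    have h1 : en2 (-p + b) ≤ M2h := hM2h _ hbh
    have h2 : en2 (-p + b) = en2 b - en2 p := by
      rw [map_add, map_neg]; ring
    linarith
  -- conclude support of g is {p}
  have hsg : g.coeff.support = {p} := by
    apply Finset.eq_singleton_iff_unique_mem.mpr
    refine ⟨hpg, fun q hq => ?_⟩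
    have e1 : lam q ≤ lam p := by rw [hpM]; exact hMg q hq
    have e2 : en1 q ≤ en1 p := le_trans (hM1g q hq) hM1gp
    have e3 : en2 q ≤ en2 p := le_trans (hM2g q hq) hM2gp
    have s1 := hsum q
    have s2 := hsum p
    have e1' : lam (q - p) = 0 := by rw [map_sub]; linarith
    have e2' : en1 (q - p) = 0 := by rw [map_sub]; linarith
    have := hkill _ e1' e2'
    rwa [sub_eq_zero] at this
  exact isUnit_of_support_eq g p hsg


lemma toR_fst (p : ℤ × ℤ) : (toR p).1 = (p.1 : ℝ) := rfl
lemma toR_snd (p : ℤ × ℤ) : (toR p).2 = (p.2 : ℝ) := rfl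

end Stmt0Aux

open Stmt0Aux

set_option maxHeartbeats 2000000

/-- Irreducibility criterion: if the Newton polytope of `f` lies in a (nondegenerate)
triangle having an edge whose only lattice points are its two endpoints, and the
coefficients of `f` at these endpoints are nonzero, then `f` is irreducible in
`K[x^{±1}, y^{±1}]`. -/
theorem stmt0 {K : Type*} [Field K] (f : LP K)
    (a b : ℤ × ℤ) (c : ℝ × ℝ)
    (htri : AffineIndependent ℝ ![toR a, toR b, c])
    (hsupp : newtonPolytope f ⊆ convexHull ℝ {toR a, toR b, c})
    (hedge : ∀ p : ℤ × ℤ, toR p ∈ segment ℝ (toR a) (toR b) → p = a ∨ p = b)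
    (ha : f.coeff a ≠ 0) (hb : f.coeff b ≠ 0) :
    Irreducible f := by
  classical
  simp only [newtonPolytope] at hsupp
  have haf : a ∈ f.coeff.support := Finsupp.mem_support_iff.mpr ha
  have hbf : b ∈ f.coeff.support := Finsupp.mem_support_iff.mpr hb
  have hABne : toR a ≠ toR b := by
    intro hEq
    have h01 : (0 : Fin 3) ≠ 1 := by decide
    apply h01
    apply htri.injective
    simpa using hEq
  have hab : a ≠ b := fun h => hABne (congrArg toR h)
  -- the triangle combination data
  have hcomb : ∀ p ∈ f.coeff.support, ∃ t u v : ℝ, 0 ≤ t ∧ 0 ≤ u ∧ 0 ≤ v ∧ t + u + v = 1 ∧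
      ((p.1 : ℝ)) = t * (a.1 : ℝ) + u * (b.1 : ℝ) + v * c.1 ∧
      ((p.2 : ℝ)) = t * (a.2 : ℝ) + u * (b.2 : ℝ) + v * c.2 := by
    intro p hp
    have hmem : toR p ∈ convexHull ℝ {toR a, toR b, c} :=
      hsupp (subset_convexHull ℝ _ (Set.mem_image_of_mem toR (Finset.mem_coe.mpr hp)))
    obtain ⟨t, u, v, ht, hu, hv, htuv, hx⟩ := mem_triangle hmem
    refine ⟨t, u, v, ht, hu, hv, htuv, ?_, ?_⟩
    · have h1 := congrArg Prod.fst hx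
      simpa [toR_fst, Prod.fst_add, Prod.smul_fst, smul_eq_mul] using h1
    · have h1 := congrArg Prod.snd hx
      simpa [toR_snd, Prod.snd_add, Prod.smul_snd, smul_eq_mul] using h1
  -- the nondegeneracy quantity
  set k : ℝ := cross (toR b - toR a) (c - toR a) with hkdef
  have hk : k ≠ 0 := cross_ne htri
  have hkexp : k = ((b.1:ℝ) - (a.1:ℝ)) * (c.2 - (a.2:ℝ))
      - ((b.2:ℝ) - (a.2:ℝ)) * (c.1 - (a.1:ℝ)) := by
    rw [hkdef]
    simp [cross, Prod.fst_sub, Prod.snd_sub, toR_fst, toR_snd]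
  set sg : ℝ := if 0 < k then 1 else -1 with hsgdef
  have hsgpm : sg = 1 ∨ sg = -1 := by
    rw [hsgdef]; split_ifs <;> simp
  have hsgk : 0 < sg * k := by
    rcases lt_or_gt_of_ne hk with h | h
    · rw [hsgdef, if_neg (not_lt.mpr h.le)]; nlinarith
    · rw [hsgdef, if_pos h]; nlinarith
  -- the three edge functionals
  set lam : (ℤ × ℤ) →+ ℝ :=
    lf (sg * ((b.2:ℝ) - (a.2:ℝ))) (-(sg * ((b.1:ℝ) - (a.1:ℝ)))) with hlamdef
  set en1 : (ℤ × ℤ) →+ ℝ :=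
    lf (-(sg * (c.2 - (a.2:ℝ)))) (sg * (c.1 - (a.1:ℝ))) with hen1def
  set en2 : (ℤ × ℤ) →+ ℝ :=
    lf (sg * (c.2 - (b.2:ℝ))) (-(sg * (c.1 - (b.1:ℝ)))) with hen2def
  have hsum : ∀ v : ℤ × ℤ, lam v + en1 v + en2 v = 0 := by
    intro v
    rw [hlamdef, hen1def, hen2def]
    simp only [lf_apply]
    ring
  have hlamb : lam b = lam a := by
    rw [hlamdef]; simp only [lf_apply]; ring
  -- bounds from the triangle
  have Hlam : ∀ p ∈ f.coeff.support, lam p ≤ lam a := by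
    intro p hp
    obtain ⟨t, u, v, ht, hu, hv, htuv, hx1, hx2⟩ := hcomb p hp
    have heq : lam p = lam a - v * (sg * k) := by
      rw [hlamdef, hkexp]
      simp only [lf_apply]
      linear_combination (sg * ((b.2:ℝ) - (a.2:ℝ))) * hx1
        + (-(sg * ((b.1:ℝ) - (a.1:ℝ)))) * hx2
        + ((sg * ((b.2:ℝ) - (a.2:ℝ))) * (a.1:ℝ)
          + (-(sg * ((b.1:ℝ) - (a.1:ℝ)))) * (a.2:ℝ)) * htuv
    nlinarith [mul_nonneg hv hsgk.le]
  have Htop : ∀ p ∈ f.coeff.support, lam p = lam a → p = a ∨ p = b := by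
    intro p hp he
    obtain ⟨t, u, v, ht, hu, hv, htuv, hx1, hx2⟩ := hcomb p hp
    have heq : lam p = lam a - v * (sg * k) := by
      rw [hlamdef, hkexp]
      simp only [lf_apply]
      linear_combination (sg * ((b.2:ℝ) - (a.2:ℝ))) * hx1
        + (-(sg * ((b.1:ℝ) - (a.1:ℝ)))) * hx2
        + ((sg * ((b.2:ℝ) - (a.2:ℝ))) * (a.1:ℝ)
          + (-(sg * ((b.1:ℝ) - (a.1:ℝ)))) * (a.2:ℝ)) * htuv
    have hv0 : v = 0 := by
      have h1 : v * (sg * k) = 0 := by linarith [he, heq]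
      rcases mul_eq_zero.mp h1 with h | h
      · exact h
      · exact absurd h (ne_of_gt hsgk)
    apply hedge
    refine ⟨t, u, ht, hu, by linarith, ?_⟩
    refine Prod.ext ?_ ?_
    · have : (t • toR a + u • toR b).1 = t * (a.1:ℝ) + u * (b.1:ℝ) := by
        simp [toR_fst, Prod.fst_add, Prod.smul_fst, smul_eq_mul]
      rw [this, toR_fst]
      rw [hv0] at hx1
      linarith
    · have : (t • toR a + u • toR b).2 = t * (a.2:ℝ) + u * (b.2:ℝ) := by
        simp [toR_snd, Prod.snd_add, Prod.smul_snd, smul_eq_mul]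
      rw [this, toR_snd]
      rw [hv0] at hx2
      linarith
  have H1 : ∀ p ∈ f.coeff.support, en1 p ≤ en1 a := by
    intro p hp
    obtain ⟨t, u, v, ht, hu, hv, htuv, hx1, hx2⟩ := hcomb p hp
    have heq : en1 p = en1 a - u * (sg * k) := by
      rw [hen1def, hkexp]
      simp only [lf_apply]
      linear_combination (-(sg * (c.2 - (a.2:ℝ)))) * hx1
        + (sg * (c.1 - (a.1:ℝ))) * hx2
        + ((-(sg * (c.2 - (a.2:ℝ)))) * (a.1:ℝ)
          + (sg * (c.1 - (a.1:ℝ))) * (a.2:ℝ)) * htuv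
    nlinarith [mul_nonneg hu hsgk.le]
  have H2 : ∀ p ∈ f.coeff.support, en2 p ≤ en2 b := by
    intro p hp
    obtain ⟨t, u, v, ht, hu, hv, htuv, hx1, hx2⟩ := hcomb p hp
    have heq : en2 p = en2 b - t * (sg * k) := by
      rw [hen2def, hkexp]
      simp only [lf_apply]
      linear_combination (sg * (c.2 - (b.2:ℝ))) * hx1
        + (-(sg * (c.1 - (b.1:ℝ)))) * hx2
        + ((sg * (c.2 - (b.2:ℝ))) * (b.1:ℝ)
          + (-(sg * (c.1 - (b.1:ℝ)))) * (b.2:ℝ)) * htuv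
    nlinarith [mul_nonneg ht hsgk.le]
  -- kill lemmas
  have hkill : ∀ v : ℤ × ℤ, lam v = 0 → en1 v = 0 → v = 0 := by
    intro v h1 h2
    rw [hlamdef] at h1; rw [hen1def] at h2
    simp only [lf_apply] at h1 h2
    have hc1 : cross (toR b - toR a) (toR v) = 0 := by
      simp only [cross, Prod.fst_sub, Prod.snd_sub, toR_fst, toR_snd]
      rcases hsgpm with h | h <;> rw [h] at h1 <;> linarith
    have hc2 : cross (c - toR a) (toR v) = 0 := by
      simp only [cross, Prod.fst_sub, Prod.snd_sub, toR_fst, toR_snd]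
      rcases hsgpm with h | h <;> rw [h] at h2 <;> linarith
    have hv0 : toR v = 0 := cross_indep_kill hc1 hc2 (hkdef ▸ hk)
    have : toR v = toR 0 := by
      rw [hv0]; simp [toR]; rfl
    simpa using toR_inj this
  -- a primitive functional along the edge
  obtain ⟨al, be, halbe⟩ := bezout a b hab hedge
  set rho : (ℤ × ℤ) →+ ℝ := lf (al : ℝ) (be : ℝ) with hrhodef
  have hrho_int : ∀ v : ℤ × ℤ, rho v = ((al * v.1 + be * v.2 : ℤ) : ℝ) := by
    intro v
    rw [hrhodef]
    simp only [lf_apply]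
    push_cast
    ring
  have hkill2 : ∀ v : ℤ × ℤ, lam v = 0 → rho v = 0 → v = 0 := by
    intro v h1 h2
    rw [hlamdef] at h1
    simp only [lf_apply] at h1
    have e : (b.2 - a.2) * v.1 = (b.1 - a.1) * v.2 := by
      have eR : ((b.2:ℝ) - (a.2:ℝ)) * (v.1:ℝ) = ((b.1:ℝ) - (a.1:ℝ)) * (v.2:ℝ) := by
        rcases hsgpm with h | h <;> rw [h] at h1 <;> linarith
      exact_mod_cast eR
    have hr0 : al * v.1 + be * v.2 = 0 := by
      have := hrho_int v
      rw [h2] at this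
      exact_mod_cast this.symm
    have hv1 : v.1 = 0 := by
      linear_combination (-v.1) * halbe + be * e + (b.1 - a.1) * hr0
    have hv2 : v.2 = 0 := by
      linear_combination (-v.2) * halbe + (-al) * e + (b.2 - a.2) * hr0
    exact Prod.ext hv1 hv2
  have hrho_ba : rho b - rho a = 1 := by
    rw [hrhodef]
    simp only [lf_apply]
    have h1R : (al:ℝ) * ((b.1:ℝ) - (a.1:ℝ)) + (be:ℝ) * ((b.2:ℝ) - (a.2:ℝ)) = 1 := by
      exact_mod_cast halbe
    linarith [h1R]
  -- now prove irreducibility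
  constructor
  · intro hu
    exact hab (isUnit_support_eq hu haf hbf)
  · intro g h hf
    have hf0 : f ≠ 0 := fun h0 => ha (by rw [h0]; simp)
    have hg0 : g ≠ 0 := fun h0 => hf0 (by rw [hf, h0, zero_mul])
    have hh0 : h ≠ 0 := fun h0 => hf0 (by rw [hf, h0, mul_zero])
    obtain ⟨pa, hpa, qa, hqa, hpqa⟩ := Finset.mem_add.mp
      (AddMonoidAlgebra.support_coeff_mul_subset g h (hf ▸ haf))
    obtain ⟨Mg, hMg, hMg'⟩ := exists_max lam g hg0
    obtain ⟨Mh, hMh, hMh'⟩ := exists_max lam h hh0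
    have hMM : Mg + Mh = lam a := by
      obtain ⟨_, s, hs, hsM⟩ := mul_attains lam Mg Mh g h hMg hMg' hMh hMh'
      rw [← hf] at hs
      refine le_antisymm (hsM ▸ Hlam s hs) ?_
      calc lam a = lam pa + lam qa := by rw [← map_add, hpqa]
      _ ≤ Mg + Mh := add_le_add (hMg pa hpa) (hMh qa hqa)
    have htm : top lam (lam a) f = top lam Mg g * top lam Mh h := by
      rw [hf, ← hMM]
      exact top_mul lam Mg Mh g h hMg hMh
    have hTfsupp : (top lam (lam a) f).coeff.support = {a, b} := by
      ext q
      rw [top_support, Finset.mem_filter, Finset.mem_insert, Finset.mem_singleton]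
      constructor
      · rintro ⟨hq, hq2⟩
        exact Htop q hq hq2
      · rintro (rfl | rfl)
        · exact ⟨haf, rfl⟩
        · exact ⟨hbf, hlamb⟩
    have hTg0 : top lam Mg g ≠ 0 := by
      obtain ⟨p, hp, hpM⟩ := hMg'
      exact top_ne_zero lam Mg g hp hpM
    have hTh0 : top lam Mh h ≠ 0 := by
      obtain ⟨q, hq, hqM⟩ := hMh'
      exact top_ne_zero lam Mh h hq hqM
    obtain ⟨Rg, hRg, hRg'⟩ := exists_max rho (top lam Mg g) hTg0
    obtain ⟨Rh, hRh, hRh'⟩ := exists_max rho (top lam Mh h) hTh0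
    obtain ⟨R'g, hR'g, hR'g'⟩ := exists_max (-rho) (top lam Mg g) hTg0
    obtain ⟨R'h, hR'h, hR'h'⟩ := exists_max (-rho) (top lam Mh h) hTh0
    obtain ⟨_, s1, hs1, hs1M⟩ := mul_attains rho Rg Rh _ _ hRg hRg' hRh hRh'
    obtain ⟨_, s2, hs2, hs2M⟩ := mul_attains (-rho) R'g R'h _ _ hR'g hR'g' hR'h hR'h'
    rw [← htm, hTfsupp] at hs1 hs2
    rw [Finset.mem_insert, Finset.mem_singleton] at hs1 hs2
    -- integrality and nonnegativity of the two widths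
    obtain ⟨pg, hpg, hpgR⟩ := hRg'
    obtain ⟨pg', hpg', hpgR'⟩ := hR'g'
    obtain ⟨ph, hph, hphR⟩ := hRh'
    obtain ⟨ph', hph', hphR'⟩ := hR'h'
    have hneg : ∀ (w : ℤ × ℤ), (-rho) w = -(rho w) := fun w => rfl
    have hmg : Rg + R'g = ((al * (pg - pg').1 + be * (pg - pg').2 : ℤ) : ℝ) := by
      rw [← hpgR, ← hpgR', hneg, ← hrho_int, map_sub]
      ring
    have hmh : Rh + R'h = ((al * (ph - ph').1 + be * (ph - ph').2 : ℤ) : ℝ) := by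
      rw [← hphR, ← hphR', hneg, ← hrho_int, map_sub]
      ring
    have hmg0 : (0:ℝ) ≤ Rg + R'g := by
      have h1 : rho pg' ≤ Rg := hRg pg' hpg'
      have h2 : -(rho pg') ≤ R'g := by rw [← hneg]; exact hR'g pg' hpg'
      linarith
    have hmh0 : (0:ℝ) ≤ Rh + R'h := by
      have h1 : rho ph' ≤ Rh := hRh ph' hph'
      have h2 : -(rho ph') ≤ R'h := by rw [← hneg]; exact hR'h ph' hph'
      linarith
    have htot : (Rg + R'g) + (Rh + R'h) ≤ 1 := by
      have e1 : Rg + Rh = rho s1 := hs1M.symm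
      have e2 : R'g + R'h = -(rho s2) := by rw [← hs2M, hneg]
      have e3 : rho s1 - rho s2 ≤ 1 := by
        rcases hs1 with rfl | rfl <;> rcases hs2 with rfl | rfl
        · linarith
        · linarith [hrho_ba]
        · linarith [hrho_ba]
        · linarith
      linarith
    -- one of the two widths is zero
    have hzero : Rg + R'g = 0 ∨ Rh + R'h = 0 := by
      set mg : ℤ := al * (pg - pg').1 + be * (pg - pg').2 with hmgdef
      set mh : ℤ := al * (ph - ph').1 + be * (ph - ph').2 with hmhdef
      have i1 : (0:ℤ) ≤ mg := by exact_mod_cast hmg ▸ hmg0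
      have i2 : (0:ℤ) ≤ mh := by exact_mod_cast hmh ▸ hmh0
      have i3 : mg + mh ≤ 1 := by
        have : ((mg + mh : ℤ) : ℝ) ≤ 1 := by push_cast; rw [← hmg, ← hmh] at *; linarith [htot]
        exact_mod_cast this
      have : mg = 0 ∨ mh = 0 := by omega
      rcases this with h0 | h0
      · left; rw [hmg, h0]; simp
      · right; rw [hmh, h0]; simp
    rcases hzero with h0 | h0
    · left
      have hwidth : ∀ p ∈ g.coeff.support, lam p = Mg → ∀ q ∈ g.coeff.support, lam q = Mg →
          rho p = rho q := by
        intro p hp hpM q hq hqM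
        have hpT : p ∈ (top lam Mg g).coeff.support := by
          rw [top_support]; exact Finset.mem_filter.mpr ⟨hp, hpM⟩
        have hqT : q ∈ (top lam Mg g).coeff.support := by
          rw [top_support]; exact Finset.mem_filter.mpr ⟨hq, hqM⟩
        have e1 : rho p ≤ Rg := hRg p hpT
        have e2 : -(rho p) ≤ R'g := by rw [← hneg]; exact hR'g p hpT
        have e3 : rho q ≤ Rg := hRg q hqT
        have e4 : -(rho q) ≤ R'g := by rw [← hneg]; exact hR'g q hqT
        linarith
      exact core f g h hf hg0 hh0 a b lam en1 en2 rho hsum hkill hkill2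
        Hlam H1 H2 ha hb hlamb Mg hMg hMg' hwidth
    · right
      have hwidth : ∀ p ∈ h.coeff.support, lam p = Mh → ∀ q ∈ h.coeff.support, lam q = Mh →
          rho p = rho q := by
        intro p hp hpM q hq hqM
        have hpT : p ∈ (top lam Mh h).coeff.support := by
          rw [top_support]; exact Finset.mem_filter.mpr ⟨hp, hpM⟩
        have hqT : q ∈ (top lam Mh h).coeff.support := by
          rw [top_support]; exact Finset.mem_filter.mpr ⟨hq, hqM⟩
        have e1 : rho p ≤ Rh := hRh p hpT
        have e2 : -(rho p) ≤ R'h := by rw [← hneg]; exact hR'h p hpT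
        have e3 : rho q ≤ Rh := hRh q hqT
        have e4 : -(rho q) ≤ R'h := by rw [← hneg]; exact hR'h q hqT
        linarith
      exact core f h g (by rw [hf, mul_comm]) hh0 hg0 a b lam en1 en2 rho hsum hkill hkill2
        Hlam H1 H2 ha hb hlamb Mh hMh hMh' hwidth
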